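/- Let h : ℕ → ℕ be monotonically increasing and satisfy condition (a). Suppose x, y, z ∈ ℕ satisfy x ⊕ y ⊕ z ≠ 0 and y ≤ h(z). Then at least one of the following holds: (1) there exists u < x with u ⊕ y ⊕ z = 0; (2) there exists v < y with x ⊕ v ⊕ z = 0; (3) there exists w < z with x ⊕ y ⊕ w = 0 and y ≤ h(w); (4) there exist v < y and w' < z with x ⊕ v ⊕ w' = 0 and v = h(w'). -/

import Mathlib

namespace Stmt5Aux

lemma testBit_div_pow (n k i : ℕ) : (n / 2^k).testBit i = n.testBit (k + i) := by
  rw [← Nat.shiftRight_eq_div_pow, Nat.testBit_shiftRight]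

lemma div_pow_eq_iff (m n b : ℕ) :
    m / 2^b = n / 2^b ↔ ∀ j, b ≤ j → m.testBit j = n.testBit j := by
  constructor
  · intro H j hj
    have h2 := congrArg (fun t => Nat.testBit t (j - b)) H
    simpa [testBit_div_pow, Nat.add_sub_cancel' hj] using h2
  · intro H
    apply Nat.eq_of_testBit_eq
    intro i
    rw [testBit_div_pow, testBit_div_pow]
    exact H _ (Nat.le_add_right _ _)

def greedy (h : ℕ → ℕ) (x k w : ℕ) : ℕ → ℕ
  | 0 => w / 2 ^ k
  | n + 1 => 2 * greedy h x k w n +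
      (x.testBit (k - n - 1) != (h (greedy h x k w n * 2 ^ (k - n))).testBit (k - n - 1)).toNat

lemma greedy_succ_div (h : ℕ → ℕ) (x k w n : ℕ) :
    greedy h x k w (n + 1) / 2 = greedy h x k w n := by
  have hb : (x.testBit (k - n - 1) != (h (greedy h x k w n * 2 ^ (k - n))).testBit (k - n - 1)).toNat ≤ 1 :=
    Bool.toNat_le _
  show (2 * greedy h x k w n + _) / 2 = _
  omega

lemma greedy_div (h : ℕ → ℕ) (x k w : ℕ) (m n : ℕ) :
    greedy h x k w (m + n) / 2 ^ m = greedy h x k w n := by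
  induction m with
  | zero => simp
  | succ m ih =>
    have : m + 1 + n = (m + n) + 1 := by omega
    rw [this, pow_succ, mul_comm, ← Nat.div_div_eq_div_mul, greedy_succ_div, ih]

lemma greedy_bit (h : ℕ → ℕ) (x k w n : ℕ) :
    (greedy h x k w (n + 1)).testBit 0 =
      (x.testBit (k - n - 1) != (h (greedy h x k w n * 2 ^ (k - n))).testBit (k - n - 1)) := by
  show (2 * greedy h x k w n + (Bool.toNat _)).testBit 0 = _
  rw [Nat.testBit_zero]
  cases hb : (x.testBit (k - n - 1) != (h (greedy h x k w n * 2 ^ (k - n))).testBit (k - n - 1)) <;>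
    simp [hb, Nat.mul_add_mod]

end Stmt5Aux

/-- Condition (a): if `⌊z/2^i⌋ = ⌊z'/2^i⌋` for some `i ≥ 1`,
then `⌊h(z)/2^(i-1)⌋ = ⌊h(z')/2^(i-1)⌋`. -/
def CondA (h : ℕ → ℕ) : Prop :=
  ∀ z z' i : ℕ, 1 ≤ i → z / 2 ^ i = z' / 2 ^ i →
    h z / 2 ^ (i - 1) = h z' / 2 ^ (i - 1)

open Stmt5Aux in
theorem stmt_5 (h : ℕ → ℕ) (hmono : Monotone h) (hA : CondA h)
    (x y z : ℕ) (hne : x ^^^ y ^^^ z ≠ 0) (hyz : y ≤ h z) :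
    (∃ u < x, u ^^^ y ^^^ z = 0) ∨
    (∃ v < y, x ^^^ v ^^^ z = 0) ∨
    (∃ w < z, x ^^^ y ^^^ w = 0 ∧ y ≤ h w) ∨
    (∃ v < y, ∃ w' < z, x ^^^ v ^^^ w' = 0 ∧ v = h w') := by
  obtain ⟨k, hk1, hk2⟩ := Nat.exists_most_significant_bit hne
  have hsk : ((x.testBit k ^^ y.testBit k) ^^ z.testBit k) = true := by
    simpa [Nat.testBit_xor] using hk1
  have hshigh : ∀ j, k < j → ((x.testBit j ^^ y.testBit j) ^^ z.testBit j) = false := by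
    intro j hj
    simpa [Nat.testBit_xor] using hk2 j hj
  by_cases hx : x.testBit k = true
  · -- option 1
    left
    refine ⟨y ^^^ z, ?_, ?_⟩
    · apply Nat.lt_of_testBit k
      · rw [Nat.testBit_xor]
        revert hsk; rw [hx]
        cases y.testBit k <;> cases z.testBit k <;> simp
      · exact hx
      · intro j hj
        have hs := hshigh j hj
        rw [Nat.testBit_xor]
        revert hs
        cases x.testBit j <;> cases y.testBit j <;> cases z.testBit j <;> simp
    · rw [Nat.xor_comm y z, Nat.xor_xor_cancel_right, Nat.xor_self]
  · by_cases hy : y.testBit k = true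
    · -- option 2
      right; left
      refine ⟨x ^^^ z, ?_, ?_⟩
      · apply Nat.lt_of_testBit k
        · rw [Nat.testBit_xor]
          revert hsk; rw [hy]
          cases x.testBit k <;> cases z.testBit k <;> simp
        · exact hy
        · intro j hj
          have hs := hshigh j hj
          rw [Nat.testBit_xor]
          revert hs
          cases x.testBit j <;> cases y.testBit j <;> cases z.testBit j <;> simp
      · rw [Nat.xor_xor_cancel_left, Nat.xor_self]
    · -- z has the top bit
      have hz : z.testBit k = true := by
        revert hsk; rw [Bool.not_eq_true] at hx hy; rw [hx, hy]; simp
      set w := x ^^^ y with hw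
      have hwbit : ∀ j, w.testBit j = (x.testBit j ^^ y.testBit j) := by
        intro j; rw [hw, Nat.testBit_xor]
      have hwhigh : ∀ j, k < j → w.testBit j = z.testBit j := by
        intro j hj
        have hs := hshigh j hj
        rw [hwbit]
        revert hs
        cases x.testBit j <;> cases y.testBit j <;> cases z.testBit j <;> simp
      have hwk : w.testBit k = false := by
        rw [hwbit]; revert hsk; rw [Bool.not_eq_true] at hx hy; rw [hx, hy, hz]; simp
      have hwz : w < z := Nat.lt_of_testBit k hwk hz hwhigh
      by_cases hyw : y ≤ h w
      · right; right; left
        exact ⟨w, hwz, by rw [hw]; exact Nat.xor_self _, hyw⟩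
      · -- option 4: greedy construction
        push_neg at hyw   -- h w < y
        right; right; right
        set w' := greedy h x k w k with hw'
        have hpre : ∀ n, n ≤ k → w' / 2 ^ (k - n) = greedy h x k w n := by
          intro n hn
          have h0 := greedy_div h x k w (k - n) n
          rw [show k - n + n = k from by omega] at h0
          rw [hw']
          exact h0
        have hP1 : w' / 2 ^ k = w / 2 ^ k := by
          have h0 := hpre 0 (Nat.zero_le _)
          simpa [greedy] using h0
        have hP3 : w' / 2 ^ (k+1) = w / 2 ^ (k+1) := by
          rw [pow_succ, ← Nat.div_div_eq_div_mul, ← Nat.div_div_eq_div_mul, hP1]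
        have hP2 : w / 2 ^ (k+1) = z / 2 ^ (k+1) := by
          rw [div_pow_eq_iff]
          intro j hj
          exact hwhigh j (by omega)
        have hP4 : h w / 2 ^ k = h z / 2 ^ k := by
          have h0 := hA w z (k+1) (by omega) hP2
          simpa using h0
        have hP5 : h w' / 2 ^ k = h w / 2 ^ k := by
          have h0 := hA w' w (k+1) (by omega) hP3
          simpa using h0
        have hP6 : y / 2 ^ k = h w / 2 ^ k := by
          have h1 : h w / 2 ^ k ≤ y / 2 ^ k := Nat.div_le_div_right (le_of_lt hyw)
          have h2 : y / 2 ^ k ≤ h z / 2 ^ k := Nat.div_le_div_right hyz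
          omega
        have hP7 : ∀ j, k ≤ j → w'.testBit j = w.testBit j :=
          (div_pow_eq_iff _ _ _).1 hP1
        have hP8 : ∀ j, k ≤ j → (h w').testBit j = y.testBit j := by
          intro j hj
          have e1 := (div_pow_eq_iff (h w') (h w) k).1 hP5 j hj
          have e2 := (div_pow_eq_iff y (h w) k).1 hP6 j hj
          rw [e1, e2]
        have hC : ∀ j, j < k → w'.testBit j = (x.testBit j != (h w').testBit j) := by
          intro j hj
          set n := k - j - 1 with hn
          have hkn : k - n = j + 1 := by omega
          have hd1 : w' / 2 ^ (j+1) = greedy h x k w n := by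
            have h0 := hpre n (by omega); rwa [hkn] at h0
          have hd2 : w' / 2 ^ j = greedy h x k w (n+1) := by
            have h0 := hpre (n+1) (by omega)
            rwa [show k - (n+1) = j from by omega] at h0
          have hb : w'.testBit j = (greedy h x k w (n+1)).testBit 0 := by
            rw [← hd2, testBit_div_pow, Nat.add_zero]
          rw [hb, greedy_bit]
          have hrep : w' / 2 ^ (j+1) = (greedy h x k w n * 2 ^ (k - n)) / 2 ^ (j+1) := by
            rw [hkn, Nat.mul_div_cancel _ (by positivity), hd1]
          have hhd : h w' / 2 ^ j = h (greedy h x k w n * 2 ^ (k - n)) / 2 ^ j := by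
            have h0 := hA w' (greedy h x k w n * 2 ^ (k - n)) (j+1) (by omega) hrep
            simpa using h0
          have hht : (h w').testBit j = (h (greedy h x k w n * 2 ^ (k - n))).testBit j :=
            (div_pow_eq_iff _ _ _).1 hhd j le_rfl
          rw [show k - n - 1 = j from by omega, hht]
        set v := x ^^^ w' with hv
        have hveq : v = h w' := by
          apply Nat.eq_of_testBit_eq
          intro j
          rw [hv, Nat.testBit_xor]
          rcases lt_or_ge j k with hjk | hjk
          · rw [hC j hjk]
            cases x.testBit j <;> cases (h w').testBit j <;> simp
          · rw [hP7 j hjk, hP8 j hjk, hwbit]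
            cases x.testBit j <;> cases y.testBit j <;> simp
        have hw'z : w' < z := Nat.lt_of_testBit k (by rw [hP7 k le_rfl]; exact hwk) hz
          (fun j hj => by rw [hP7 j (le_of_lt hj)]; exact hwhigh j hj)
        have hxvw' : x ^^^ v ^^^ w' = 0 := by
          rw [hv, Nat.xor_xor_cancel_left, Nat.xor_self]
        have hvney : v ≠ y := by
          intro he
          have hww : w' = w := by
            have h0 := congrArg (fun t => x ^^^ t) he
            simp only [hv] at h0
            rw [Nat.xor_xor_cancel_left] at h0
            rw [h0, hw]
          rw [hveq, hww] at he
          omega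
        have hxorne : v ^^^ y ≠ 0 := fun hc => hvney (Nat.xor_eq_zero_iff.1 hc)
        obtain ⟨b, hb1, hb2⟩ := Nat.exists_most_significant_bit hxorne
        have hbne : v.testBit b ≠ y.testBit b := by
          revert hb1; rw [Nat.testBit_xor]
          cases v.testBit b <;> cases y.testBit b <;> simp
        have hbagree : ∀ j, b < j → v.testBit j = y.testBit j := by
          intro j hj
          have h0 := hb2 j hj
          revert h0; rw [Nat.testBit_xor]
          cases v.testBit j <;> cases y.testBit j <;> simp
        have hbk : b < k := by
          by_contra hc
          push_neg at hc
          exact hbne (by rw [hveq, hP8 b hc])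
        have hwagree : w' / 2 ^ (b+1) = w / 2 ^ (b+1) := by
          rw [div_pow_eq_iff]
          intro j hj
          rcases lt_or_ge j k with hjk | hjk
          · rw [hC j hjk, ← hveq, hbagree j (by omega), hwbit]
          · exact hP7 j hjk
        have hhagree : h w' / 2 ^ b = h w / 2 ^ b := by
          have h0 := hA w' w (b+1) (by omega) hwagree
          simpa using h0
        have hhag : ∀ j, b ≤ j → (h w').testBit j = (h w).testBit j :=
          (div_pow_eq_iff _ _ _).1 hhagree
        have hwyagree : ∀ j, b < j → (h w).testBit j = y.testBit j := by
          intro j hj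
          rw [← hhag j (le_of_lt hj), ← hveq]
          exact hbagree j hj
        have hwyb : (h w).testBit b = v.testBit b := by
          rw [← hhag b le_rfl, ← hveq]
        have hyb : y.testBit b = true := by
          by_contra hc
          rw [Bool.not_eq_true] at hc
          have hhb : (h w).testBit b = true := by
            rw [hwyb]; revert hbne; rw [hc]; cases v.testBit b <;> simp
          have h0 : y < h w := Nat.lt_of_testBit b hc hhb (fun j hj => (hwyagree j hj).symm)
          omega
        have hvb : v.testBit b = false := by
          revert hbne; rw [hyb]; cases v.testBit b <;> simp
        have hvy : v < y := Nat.lt_of_testBit b hvb hyb hbagree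
        exact ⟨v, hvy, w', hw'z, hxvw', hveq⟩
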